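/- Let R be a commutative ring and c, z ∈ R. Let E₃₂ denote the 4×4 matrix with a single nonzero entry 1 in position (3,2). Then (I + c·E₃₂)·n(z,0,0) = n(z, c·z, 0)·(I + c·E₃₂). -/

import Mathlib

open Matrix

noncomputable section

/-- The unipotent matrix `n(z,a,b)`. -/
def nmat {R : Type*} [CommRing R] (z a b : R) : Matrix (Fin 4) (Fin 4) R :=
  !![1, 0, 0, 0;
     z, 1, 0, 0;
     a, 0, 1, 0;
     b, a, -z, 1]

/-- The elementary matrix `E₃₂` with a single nonzero entry `1` in position (3,2). -/
def E32 (R : Type*) [CommRing R] : Matrix (Fin 4) (Fin 4) R :=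
  Matrix.single 2 1 1

theorem stmt3 {R : Type*} [CommRing R] (c z : R) :
    (1 + c • E32 R) * nmat z 0 0 = nmat z (c * z) 0 * (1 + c • E32 R) := by
  ext i j
  simp [nmat, E32, Matrix.mul_apply, Fin.sum_univ_succ, Matrix.one_apply,
    Matrix.single]
  fin_cases i <;> fin_cases j <;> norm_num [Fin.ext_iff] <;> ring
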